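/- Let k = ℤ/3ℤ and let R be the mod-3 coinvariant algebra of S₃ as defined in the context. For the mutually orthogonal idempotents c = 2 + s₁₂₁ and c' = 2 + 2·s₁₂₁ of k[S₃], the ranges of the induced k-linear endomorphisms of R are: range(T_{c'}) = span_k{[1], [x₂], [x₁² + x₁x₂]} and range(T_{c}) = span_k{[2x₁ + x₂], [x₁x₂ + 2x₁²], [x₁²x₂]}. -/

import Mathlib

namespace Stmt3

noncomputable section

abbrev k := ZMod 3

/-- The polynomial ring `P = k[x₁, x₂, x₃]`. -/
abbrev P := MvPolynomial (Fin 3) k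

def x₁ : P := MvPolynomial.X 0
def x₂ : P := MvPolynomial.X 1

/-- The ideal generated by the elementary symmetric polynomials `e₁, e₂, e₃`. -/
def I : Ideal P := Ideal.span
  {MvPolynomial.esymm (Fin 3) k 1, MvPolynomial.esymm (Fin 3) k 2,
    MvPolynomial.esymm (Fin 3) k 3}

/-- The mod-3 coinvariant algebra of `S₃`. -/
abbrev R := P ⧸ I

/-- The quotient map `P → R` as a `k`-linear map. -/
def π : P →ₗ[k] R := (Ideal.Quotient.mkₐ k I).toLinearMap

/-- The action of a permutation `w` on `P` by permuting the variables,
as a `k`-linear map. -/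
def L (w : Equiv.Perm (Fin 3)) : P →ₗ[k] P := (MvPolynomial.rename ⇑w).toLinearMap

def t₁ : Equiv.Perm (Fin 3) := Equiv.swap 0 1
def t₂ : Equiv.Perm (Fin 3) := Equiv.swap 1 2

/-- The linear endomorphism `T_c` of `P` for the idempotent `c = 2 + s₁₂₁`. -/
def T : P →ₗ[k] P := (2 : k) • L 1 + L (t₁ * t₂ * t₁)

/-- The linear endomorphism `T_{c'}` of `P` for the idempotent `c' = 2 + 2·s₁₂₁`. -/
def T' : P →ₗ[k] P := (2 : k) • L 1 + (2 : k) • L (t₁ * t₂ * t₁)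
open MvPolynomial

private def s3 : Equiv.Perm (Fin 3) := Equiv.swap 0 2

private lemma x₁d : x₁ = X 0 := rfl
private lemma x₂d : x₂ = X 1 := rfl

private lemma hs3 : t₁ * t₂ * t₁ = s3 := by decide

private lemma e1d : esymm (Fin 3) k 1 = X 0 + X 1 + X 2 := by
  rw [esymm, show (Finset.powersetCard 1 (Finset.univ : Finset (Fin 3)))
      = {{0},{1},{2}} from by decide]
  rw [Finset.sum_insert (by decide), Finset.sum_insert (by decide), Finset.sum_singleton]
  simp [Finset.prod_singleton]
  ring

private lemma e2d : esymm (Fin 3) k 2 = X 0 * X 1 + X 0 * X 2 + X 1 * X 2 := by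
  rw [esymm, show (Finset.powersetCard 2 (Finset.univ : Finset (Fin 3)))
      = {{0,1},{0,2},{1,2}} from by decide]
  rw [Finset.sum_insert (by decide), Finset.sum_insert (by decide), Finset.sum_singleton]
  rw [Finset.prod_insert (by decide), Finset.prod_insert (by decide),
    Finset.prod_insert (by decide)]
  simp [Finset.prod_singleton]
  ring

private lemma e3d : esymm (Fin 3) k 3 = X 0 * X 1 * X 2 := by
  rw [esymm, show (Finset.powersetCard 3 (Finset.univ : Finset (Fin 3)))
      = {{0,1,2}} from by decide]
  rw [Finset.sum_singleton, Finset.prod_insert (by decide), Finset.prod_insert (by decide),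
    Finset.prod_singleton]
  ring

private lemma h3P : (3 : P) = 0 := by
  have := CharP.cast_eq_zero P 3
  norm_num at this
  exact this

private lemma E1_mem : (X 0 + X 1 + X 2 : P) ∈ I := by
  rw [← e1d]; exact Ideal.subset_span (by simp)

private lemma E2_mem : (X 0 * X 1 + X 0 * X 2 + X 1 * X 2 : P) ∈ I := by
  rw [← e2d]; exact Ideal.subset_span (by simp)

private lemma E3_mem : (X 0 * X 1 * X 2 : P) ∈ I := by
  rw [← e3d]; exact Ideal.subset_span (by simp)

private lemma mem_I3 {p : P} (a b c j : P)
    (h : p = a * (X 0 + X 1 + X 2) + b * (X 0 * X 1 + X 0 * X 2 + X 1 * X 2)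
      + c * (X 0 * X 1 * X 2) + 3 * j) : p ∈ I := by
  rw [h3P, zero_mul, add_zero] at h
  rw [h]
  exact add_mem (add_mem (I.mul_mem_left a E1_mem) (I.mul_mem_left b E2_mem))
    (I.mul_mem_left c E3_mem)

private lemma pi_sub_eq {p q : P} (h : p - q ∈ I) : π p = π q := by
  simp only [π, AlgHom.toLinearMap_apply, Ideal.Quotient.mkₐ_eq_mk]
  exact (Ideal.Quotient.mk_eq_mk_iff_sub_mem p q).mpr h

private lemma pi_eq3 {p q : P} (a b c j : P)
    (h : p - q = a * (X 0 + X 1 + X 2) + b * (X 0 * X 1 + X 0 * X 2 + X 1 * X 2)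
      + c * (X 0 * X 1 * X 2) + 3 * j) : π p = π q :=
  pi_sub_eq (mem_I3 a b c j h)

private lemma pi_zero_of_mem {p : P} (h : p ∈ I) : π p = 0 := by
  simp only [π, AlgHom.toLinearMap_apply, Ideal.Quotient.mkₐ_eq_mk]
  exact Ideal.Quotient.eq_zero_iff_mem.mpr h

private lemma pi_zero3 {p : P} (a b c j : P)
    (h : p = a * (X 0 + X 1 + X 2) + b * (X 0 * X 1 + X 0 * X 2 + X 1 * X 2)
      + c * (X 0 * X 1 * X 2) + 3 * j) : π p = 0 :=
  pi_zero_of_mem (mem_I3 a b c j h)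

private lemma pi_mul (p q : P) : π (p * q) = π p * π q := by
  simp [π]

private lemma rnX0 : rename ⇑s3 (X 0 : P) = X 2 := by
  rw [rename_X]; congr 1

private lemma rnX1 : rename ⇑s3 (X 1 : P) = X 1 := by
  rw [rename_X]; congr 1

private lemma rnX2 : rename ⇑s3 (X 2 : P) = X 0 := by
  rw [rename_X]; congr 1

private lemma rr (p : P) : rename ⇑s3 (rename ⇑s3 p) = p := by
  rw [rename_rename, show (⇑s3 ∘ ⇑s3) = id from by funext i; simp [s3, Function.comp], rename_id, AlgHom.id_apply]

private lemma T_ap (p : P) : T p = (2 : k) • p + rename ⇑s3 p := by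
  simp [T, L, hs3, Equiv.Perm.coe_one, rename_id]

private lemma T'_ap (p : P) : T' p = (2 : k) • p + (2 : k) • rename ⇑s3 p := by
  simp [T', L, hs3, Equiv.Perm.coe_one, rename_id]

private lemma ren_I {p : P} (hp : p ∈ I) : rename ⇑s3 p ∈ I := by
  induction hp using Submodule.span_induction with
  | mem g hg =>
    have : g = esymm (Fin 3) k 1 ∨ g = esymm (Fin 3) k 2 ∨ g = esymm (Fin 3) k 3 := by
      simpa using hg
    rcases this with rfl | rfl | rfl <;>
      · rw [rename_esymm]; exact Ideal.subset_span (by simp)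
  | zero => simp
  | add a b _ _ ha hb => rw [map_add]; exact add_mem ha hb
  | smul c a _ ha => rw [smul_eq_mul, map_mul]; exact I.mul_mem_left _ ha

private lemma T_I {p : P} (hp : p ∈ I) : T p ∈ I := by
  rw [T_ap]
  exact add_mem (Submodule.smul_of_tower_mem I (2 : k) hp) (ren_I hp)

private lemma T'_I {p : P} (hp : p ∈ I) : T' p ∈ I := by
  rw [T'_ap]
  exact add_mem (Submodule.smul_of_tower_mem I (2 : k) hp)
    (Submodule.smul_of_tower_mem I (2 : k) (ren_I hp))

private lemma TT (p : P) : T (T p) = T p := by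
  simp only [T_ap, map_add, map_smul, rr]
  match_scalars <;> decide

private lemma TT'0 (p : P) : T (T' p) = 0 := by
  simp only [T_ap, T'_ap, map_add, map_smul, rr]
  match_scalars <;> decide

private lemma T'T0 (p : P) : T' (T p) = 0 := by
  simp only [T_ap, T'_ap, map_add, map_smul, rr]
  match_scalars <;> decide

private lemma T'T' (p : P) : T' (T' p) = T' p := by
  simp only [T'_ap, map_add, map_smul, rr]
  match_scalars <;> decide

private lemma orth {u v : P} (h : π (T u) = π (T' v)) : π (T u) = 0 := by
  have hm : T u - T' v ∈ I := by
    simpa only [π, AlgHom.toLinearMap_apply, Ideal.Quotient.mkₐ_eq_mk,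
      Ideal.Quotient.mk_eq_mk_iff_sub_mem] using h
  have h2 : T (T u - T' v) ∈ I := T_I hm
  rw [map_sub, TT, TT'0, sub_zero] at h2
  exact pi_zero_of_mem h2

private lemma orth' {u v : P} (h : π (T' u) = π (T v)) : π (T' u) = 0 := by
  have hm : T' u - T v ∈ I := by
    simpa only [π, AlgHom.toLinearMap_apply, Ideal.Quotient.mkₐ_eq_mk,
      Ideal.Quotient.mk_eq_mk_iff_sub_mem] using h
  have h2 : T' (T' u - T v) ∈ I := T'_I hm
  rw [map_sub, T'T', T'T0, sub_zero] at h2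
  exact pi_zero_of_mem h2
private lemma s2 (p : P) : (2 : k) • p = p + p := by match_scalars; decide
private lemma s4 (p : P) : (2 : k) • ((2 : k) • p) = p := by match_scalars; decide

private def SM : Set R := {π 1, π x₁, π x₂, π (x₁ * x₂), π (x₁ ^ 2), π (x₁ ^ 2 * x₂)}
private def M : Submodule k R := Submodule.span k SM

private lemma mm0 : π 1 ∈ M := by
  apply Submodule.subset_span
  simp only [SM, Set.mem_insert_iff, Set.mem_singleton_iff]
  tauto
private lemma mm1 : π x₁ ∈ M := by
  apply Submodule.subset_span
  simp only [SM, Set.mem_insert_iff, Set.mem_singleton_iff]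
  tauto
private lemma mm2 : π x₂ ∈ M := by
  apply Submodule.subset_span
  simp only [SM, Set.mem_insert_iff, Set.mem_singleton_iff]
  tauto
private lemma mm3 : π (x₁ * x₂) ∈ M := by
  apply Submodule.subset_span
  simp only [SM, Set.mem_insert_iff, Set.mem_singleton_iff]
  tauto
private lemma mm4 : π (x₁ ^ 2) ∈ M := by
  apply Submodule.subset_span
  simp only [SM, Set.mem_insert_iff, Set.mem_singleton_iff]
  tauto
private lemma mm5 : π (x₁ ^ 2 * x₂) ∈ M := by
  apply Submodule.subset_span
  simp only [SM, Set.mem_insert_iff, Set.mem_singleton_iff]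
  tauto

private lemma M_eq {p : P} (q a b c j : P)
    (h : p - q = a * (X 0 + X 1 + X 2) + b * (X 0 * X 1 + X 0 * X 2 + X 1 * X 2)
      + c * (X 0 * X 1 * X 2) + 3 * j) (hq : π q ∈ M) : π p ∈ M := by
  rw [pi_eq3 a b c j h]; exact hq

private lemma M_zero {p : P} (a b c j : P)
    (h : p = a * (X 0 + X 1 + X 2) + b * (X 0 * X 1 + X 0 * X 2 + X 1 * X 2)
      + c * (X 0 * X 1 * X 2) + 3 * j) : π p ∈ M := by
  rw [pi_zero3 a b c j h]; exact zero_mem M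

private lemma mulX0 : ∀ r ∈ M, r * π (X 0) ∈ M := by
  intro r hr
  induction hr using Submodule.span_induction with
  | zero => rw [zero_mul]; exact zero_mem M
  | add a b _ _ ha hb => rw [add_mul]; exact add_mem ha hb
  | smul c a _ ha => rw [smul_mul_assoc]; exact Submodule.smul_mem _ _ ha
  | mem g hg =>
    have hg' : g = π 1 ∨ g = π x₁ ∨ g = π x₂ ∨ g = π (x₁ * x₂) ∨ g = π (x₁ ^ 2)
        ∨ g = π (x₁ ^ 2 * x₂) := by simpa [SM] using hg
    rcases hg' with rfl | rfl | rfl | rfl | rfl | rfl <;> rw [← pi_mul]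
    · exact M_eq x₁ 0 0 0 0 (by try simp only [x₁d, x₂d]; ring) mm1
    · exact M_eq (x₁ ^ 2) 0 0 0 0 (by try simp only [x₁d, x₂d]; ring) mm4
    · exact M_eq (x₁ * x₂) 0 0 0 0 (by try simp only [x₁d, x₂d]; ring) mm3
    · exact M_eq (x₁ ^ 2 * x₂) 0 0 0 0 (by try simp only [x₁d, x₂d]; ring) mm5
    · exact M_zero (X 0 ^ 2) (-(X 0)) 1 0 (by try simp only [x₁d, x₂d]; ring)
    · exact M_zero (X 0 ^ 2 * X 1) (-(X 0 * X 1)) (X 1) 0 (by try simp only [x₁d, x₂d]; ring)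

private lemma mulX1 : ∀ r ∈ M, r * π (X 1) ∈ M := by
  intro r hr
  induction hr using Submodule.span_induction with
  | zero => rw [zero_mul]; exact zero_mem M
  | add a b _ _ ha hb => rw [add_mul]; exact add_mem ha hb
  | smul c a _ ha => rw [smul_mul_assoc]; exact Submodule.smul_mem _ _ ha
  | mem g hg =>
    have hg' : g = π 1 ∨ g = π x₁ ∨ g = π x₂ ∨ g = π (x₁ * x₂) ∨ g = π (x₁ ^ 2)
        ∨ g = π (x₁ ^ 2 * x₂) := by simpa [SM] using hg
    rcases hg' with rfl | rfl | rfl | rfl | rfl | rfl <;> rw [← pi_mul]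
    · exact M_eq x₂ 0 0 0 0 (by try simp only [x₁d, x₂d]; ring) mm2
    · exact M_eq (x₁ * x₂) 0 0 0 0 (by try simp only [x₁d, x₂d]; ring) mm3
    · exact M_eq (x₁ ^ 2 + x₁ ^ 2 + (x₁ * x₂ + x₁ * x₂)) (X 0 + X 1) (-1) 0
        (-(X 0 ^ 2 + X 0 * X 1)) (by try simp only [x₁d, x₂d]; ring)
        (by simp only [map_add]; exact add_mem (add_mem mm4 mm4) (add_mem mm3 mm3))
    · exact M_eq (x₁ ^ 2 * x₂ + x₁ ^ 2 * x₂) (X 0 * X 1) 0 (-1) (-(X 0 ^ 2 * X 1))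
        (by try simp only [x₁d, x₂d]; ring)
        (by simp only [map_add]; exact add_mem mm5 mm5)
    · exact M_eq (x₁ ^ 2 * x₂) 0 0 0 0 (by try simp only [x₁d, x₂d]; ring) mm5
    · exact M_zero 0 (X 0 * X 1) (-(X 0 + X 1)) 0 (by try simp only [x₁d, x₂d]; ring)

private lemma mulX2 : ∀ r ∈ M, r * π (X 2) ∈ M := by
  intro r hr
  induction hr using Submodule.span_induction with
  | zero => rw [zero_mul]; exact zero_mem M
  | add a b _ _ ha hb => rw [add_mul]; exact add_mem ha hb
  | smul c a _ ha => rw [smul_mul_assoc]; exact Submodule.smul_mem _ _ ha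
  | mem g hg =>
    have hg' : g = π 1 ∨ g = π x₁ ∨ g = π x₂ ∨ g = π (x₁ * x₂) ∨ g = π (x₁ ^ 2)
        ∨ g = π (x₁ ^ 2 * x₂) := by simpa [SM] using hg
    rcases hg' with rfl | rfl | rfl | rfl | rfl | rfl <;> rw [← pi_mul]
    · exact M_eq (x₁ + x₁ + (x₂ + x₂)) 1 0 0 (-(X 0 + X 1))
        (by try simp only [x₁d, x₂d]; ring)
        (by simp only [map_add]; exact add_mem (add_mem mm1 mm1) (add_mem mm2 mm2))
    · exact M_eq (x₁ ^ 2 + x₁ ^ 2 + (x₁ * x₂ + x₁ * x₂)) (X 0) 0 0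
        (-(X 0 ^ 2 + X 0 * X 1)) (by try simp only [x₁d, x₂d]; ring)
        (by simp only [map_add]; exact add_mem (add_mem mm4 mm4) (add_mem mm3 mm3))
    · exact M_eq (x₁ ^ 2) (-(X 0)) 1 0 0 (by try simp only [x₁d, x₂d]; ring) mm4
    · exact M_zero 0 0 1 0 (by try simp only [x₁d, x₂d]; ring)
    · exact M_eq (x₁ ^ 2 * x₂ + x₁ ^ 2 * x₂) 0 (X 0) (-1) (-(X 0 ^ 2 * X 1))
        (by try simp only [x₁d, x₂d]; ring)
        (by simp only [map_add]; exact add_mem mm5 mm5)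
    · exact M_zero 0 0 (X 0) 0 (by try simp only [x₁d, x₂d]; ring)

private lemma pi_mem_M (p : P) : π p ∈ M := by
  induction p using MvPolynomial.induction_on with
  | C a =>
    rw [show (C a : P) = a • 1 from by rw [smul_eq_C_mul, mul_one], map_smul]
    exact Submodule.smul_mem _ _ mm0
  | add p q hp hq => rw [map_add]; exact add_mem hp hq
  | mul_X p i hp =>
    rw [pi_mul]
    fin_cases i
    · exact mulX0 _ hp
    · exact mulX1 _ hp
    · exact mulX2 _ hp
private lemma wA1 : π (T' 1) = π 1 := by
  simp only [T'_ap, map_one, s2]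
  exact pi_eq3 0 0 0 1 (by ring)

private lemma wA2 : π (T' x₂) = π x₂ := by
  simp only [T'_ap, x₂d, rnX1, s2]
  exact pi_eq3 0 0 0 (X 1) (by ring)

private lemma wA3 : π (T' (x₁ * x₁ + x₁ * x₁)) = π (x₁ ^ 2 + x₁ * x₂) := by
  simp only [T'_ap, map_add, map_mul, x₁d, x₂d, rnX0, s2]
  exact pi_eq3 (X 2) (-1) 0 (X 0 ^ 2 + X 2 ^ 2) (by ring)

private lemma wB1 : π (T (x₁ + x₁)) = π (2 * x₁ + x₂) := by
  simp only [T_ap, map_add, x₁d, x₂d, rnX0, s2]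
  exact pi_eq3 2 0 0 (-(X 1)) (by ring)

private lemma wB2 : π (T (x₁ * x₂ + x₁ * x₂)) = π (x₁ * x₂ + 2 * x₁ ^ 2) := by
  simp only [T_ap, map_add, map_mul, x₁d, x₂d, rnX0, rnX1, s2]
  exact pi_eq3 (-(2 * X 0)) 2 0 (X 0 * X 1) (by ring)

private lemma wB3 : π (T (x₁ ^ 2 * x₂)) = π (x₁ ^ 2 * x₂) := by
  simp only [T_ap, map_mul, map_pow, x₁d, x₂d, rnX0, rnX1, s2]
  exact pi_eq3 (X 1 * (X 0 + X 2)) (-(X 1)) (-1) 0 (by ring)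
set_option maxHeartbeats 1000000
/-- The ranges of the endomorphisms of `R` induced by `T_{c'}` and `T_c`
(since the quotient map `π` is surjective and `T`, `T'` descend to `R`, the range
of the induced endomorphism of `R` is exactly the range of `π ∘ T : P → R`). -/
theorem range_induced_idempotents :
    LinearMap.range (π ∘ₗ T') =
      Submodule.span k {π 1, π x₂, π (x₁ ^ 2 + x₁ * x₂)} ∧
    LinearMap.range (π ∘ₗ T) =
      Submodule.span k {π (2 * x₁ + x₂), π (x₁ * x₂ + 2 * x₁ ^ 2), π (x₁ ^ 2 * x₂)} := by
  set A : Submodule k R := Submodule.span k {π 1, π x₂, π (x₁ ^ 2 + x₁ * x₂)} with hA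
  set B : Submodule k R :=
    Submodule.span k {π (2 * x₁ + x₂), π (x₁ * x₂ + 2 * x₁ ^ 2), π (x₁ ^ 2 * x₂)} with hB
  have hgA1 : π 1 ∈ A := Submodule.subset_span (by left; rfl)
  have hgA2 : π x₂ ∈ A := Submodule.subset_span (by right; left; rfl)
  have hgA3 : π (x₁ ^ 2 + x₁ * x₂) ∈ A := Submodule.subset_span (by right; right; rfl)
  have hgB1 : π (2 * x₁ + x₂) ∈ B := Submodule.subset_span (by left; rfl)
  have hgB2 : π (x₁ * x₂ + 2 * x₁ ^ 2) ∈ B := Submodule.subset_span (by right; left; rfl)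
  have hgB3 : π (x₁ ^ 2 * x₂) ∈ B := Submodule.subset_span (by right; right; rfl)
  have hA_le : A ≤ LinearMap.range (π ∘ₗ T') := by
    rw [hA, Submodule.span_le]
    rintro r hr
    simp only [Set.mem_insert_iff, Set.mem_singleton_iff] at hr
    rcases hr with rfl | rfl | rfl
    · exact ⟨1, wA1⟩
    · exact ⟨x₂, wA2⟩
    · exact ⟨x₁ * x₁ + x₁ * x₁, wA3⟩
  have hB_le : B ≤ LinearMap.range (π ∘ₗ T) := by
    rw [hB, Submodule.span_le]
    rintro r hr
    simp only [Set.mem_insert_iff, Set.mem_singleton_iff] at hr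
    rcases hr with rfl | rfl | rfl
    · exact ⟨x₁ + x₁, wB1⟩
    · exact ⟨x₁ * x₂ + x₁ * x₂, wB2⟩
    · exact ⟨x₁ ^ 2 * x₂, wB3⟩
  have hMle : M ≤ A ⊔ B := by
    show Submodule.span k SM ≤ A ⊔ B
    rw [Submodule.span_le]
    rintro r hr
    have hr' : r = π 1 ∨ r = π x₁ ∨ r = π x₂ ∨ r = π (x₁ * x₂) ∨ r = π (x₁ ^ 2)
        ∨ r = π (x₁ ^ 2 * x₂) := by simpa [SM] using hr
    rcases hr' with rfl | rfl | rfl | rfl | rfl | rfl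
    · exact Submodule.mem_sup_left hgA1
    · rw [pi_eq3 (p := x₁) (q := x₂ + (2 * x₁ + x₂ + (2 * x₁ + x₂))) 0 0 0
        (-(X 0 + X 1)) (by simp only [x₁d, x₂d]; ring), map_add, map_add]
      exact add_mem (Submodule.mem_sup_left hgA2)
        (add_mem (Submodule.mem_sup_right hgB1) (Submodule.mem_sup_right hgB1))
    · exact Submodule.mem_sup_left hgA2
    · rw [pi_eq3 (p := x₁ * x₂)
        (q := (x₁ ^ 2 + x₁ * x₂) + (x₁ ^ 2 + x₁ * x₂)
          + ((x₁ * x₂ + 2 * x₁ ^ 2) + (x₁ * x₂ + 2 * x₁ ^ 2))) 0 0 0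
        (-(2 * X 0 ^ 2 + X 0 * X 1)) (by simp only [x₁d, x₂d]; ring), map_add, map_add,
        map_add]
      exact add_mem (add_mem (Submodule.mem_sup_left hgA3) (Submodule.mem_sup_left hgA3))
        (add_mem (Submodule.mem_sup_right hgB2) (Submodule.mem_sup_right hgB2))
    · rw [pi_eq3 (p := x₁ ^ 2)
        (q := (x₁ ^ 2 + x₁ * x₂) + (x₁ ^ 2 + x₁ * x₂) + (x₁ * x₂ + 2 * x₁ ^ 2)) 0 0 0
        (-(X 0 ^ 2 + X 0 * X 1)) (by simp only [x₁d, x₂d]; ring), map_add, map_add]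
      exact add_mem (add_mem (Submodule.mem_sup_left hgA3) (Submodule.mem_sup_left hgA3))
        (Submodule.mem_sup_right hgB2)
    · exact Submodule.mem_sup_right hgB3
  have hsup : ∀ x : R, x ∈ A ⊔ B := by
    intro x
    obtain ⟨p, rfl⟩ := Ideal.Quotient.mk_surjective (I := I) x
    exact hMle (pi_mem_M p)
  constructor
  · refine le_antisymm ?_ hA_le
    rintro r ⟨v, rfl⟩
    obtain ⟨a, ha, b, hb, hab⟩ := Submodule.mem_sup.mp (hsup ((π ∘ₗ T') v))
    obtain ⟨u, hu⟩ := hB_le hb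
    obtain ⟨w, hw⟩ := hA_le ha
    simp only [LinearMap.coe_comp, Function.comp_apply] at hu hw hab ⊢
    have h1 : π (T u) = π (T' (v - w)) := by
      rw [map_sub, map_sub, hw, ← hab, hu]
      ring
    have hb0 : b = 0 := by rw [← hu]; exact orth h1
    rw [← hab, hb0, add_zero]
    exact ha
  · refine le_antisymm ?_ hB_le
    rintro r ⟨v, rfl⟩
    obtain ⟨a, ha, b, hb, hab⟩ := Submodule.mem_sup.mp (hsup ((π ∘ₗ T) v))
    obtain ⟨u, hu⟩ := hA_le ha
    obtain ⟨w, hw⟩ := hB_le hb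
    simp only [LinearMap.coe_comp, Function.comp_apply] at hu hw hab ⊢
    have h1 : π (T' u) = π (T (v - w)) := by
      rw [map_sub, map_sub, hw, ← hab, hu]
      ring
    have ha0 : a = 0 := by rw [← hu]; exact orth' h1
    rw [← hab, ha0, zero_add]
    exact hb

end

end Stmt3
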